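/- For n ≥ 2 and σ > 1, the weight w_σ(x) = |x|(1+|log|x||)^σ is a Muckenhoupt A₂ weight on ℝⁿ: there exists A < ∞ such that for every ball B, (|B|^{-1} ∫_B w_σ dx)(|B|^{-1} ∫_B w_σ^{-1} dx) ≤ A. -/

import Mathlib

open MeasureTheory

noncomputable section

/-- The A₂ quantity of a weight `w` over the ball `B(x₀,R)`:
the product of the averages of `w` and `w⁻¹` over the ball. -/
def A2quantity {n : ℕ} (w : EuclideanSpace ℝ (Fin n) → ℝ)
    (x₀ : EuclideanSpace ℝ (Fin n)) (R : ℝ) : ℝ :=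
  (((volume (Metric.ball x₀ R)).toReal)⁻¹ * ∫ x in Metric.ball x₀ R, w x) *
  (((volume (Metric.ball x₀ R)).toReal)⁻¹ * ∫ x in Metric.ball x₀ R, (w x)⁻¹)

section Aux

open Real Metric Set

lemma pow_log_le (σ : ℝ) (hσ : 0 < σ) : ∃ C : ℝ, 1 ≤ C ∧ ∀ t : ℝ, 1 ≤ t →
    (1 + Real.log t) ^ σ ≤ C * t ^ (2⁻¹ : ℝ) := by
  refine ⟨(1 + 2*σ) ^ σ, ?_, ?_⟩
  · exact Real.one_le_rpow (by linarith) hσ.le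
  · intro t ht
    have ht0 : 0 < t := lt_of_lt_of_le one_pos ht
    set ε : ℝ := (2*σ)⁻¹ with hε
    have hε0 : 0 < ε := by positivity
    have h1 : ε * Real.log t ≤ t ^ ε - 1 := by
      have := Real.log_le_sub_one_of_pos (Real.rpow_pos_of_pos ht0 ε)
      rwa [Real.log_rpow ht0] at this
    have h2 : (1:ℝ) ≤ t ^ ε := Real.one_le_rpow ht hε0.le
    have h3 : 1 + Real.log t ≤ (1 + 2*σ) * t ^ ε := by
      have : Real.log t ≤ (t ^ ε - 1) / ε := by
        rw [le_div_iff₀ hε0]; linarith [h1]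
      have hεinv : (t ^ ε - 1) / ε = 2*σ*(t ^ ε - 1) := by
        rw [hε]; field_simp
      nlinarith
    have h4 : (1 + Real.log t) ^ σ ≤ ((1 + 2*σ) * t ^ ε) ^ σ := by
      apply Real.rpow_le_rpow _ h3 hσ.le
      have := Real.log_nonneg ht; linarith
    calc (1 + Real.log t) ^ σ ≤ ((1 + 2*σ) * t ^ ε) ^ σ := h4
      _ = (1 + 2*σ) ^ σ * (t ^ ε) ^ σ := Real.mul_rpow (by linarith) (by positivity)
      _ = (1 + 2*σ) ^ σ * t ^ (2⁻¹:ℝ) := by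
          rw [← Real.rpow_mul ht0.le]
          have hh : ε * σ = (2⁻¹:ℝ) := by
            rw [hε]; field_simp
          rw [hh]

lemma one_add_abs_log_le (a b : ℝ) :
    1 + |Real.log a| ≤ (1 + |Real.log b|) * (1 + |Real.log a - Real.log b|) := by
  have h1 : |Real.log a| ≤ |Real.log b| + |Real.log a - Real.log b| := by
    simpa using abs_add_le (Real.log b) (Real.log a - Real.log b)
  nlinarith [abs_nonneg (Real.log b), abs_nonneg (Real.log a - Real.log b)]

lemma key_ratio (σ : ℝ) (hσ : 0 < σ) : ∃ C : ℝ, 1 ≤ C ∧ ∀ r s : ℝ, 0 < r → r ≤ s →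
    (1 + |Real.log r|) ^ σ ≤ C * (s/r) ^ (2⁻¹:ℝ) * (1 + |Real.log s|) ^ σ ∧
    (1 + |Real.log s|) ^ σ ≤ C * (s/r) ^ (2⁻¹:ℝ) * (1 + |Real.log r|) ^ σ := by
  obtain ⟨C, hC1, hC⟩ := pow_log_le σ hσ
  refine ⟨C, hC1, fun r s hr hrs => ?_⟩
  have hs : 0 < s := lt_of_lt_of_le hr hrs
  have ht : 1 ≤ s / r := (one_le_div hr).mpr hrs
  have hlog : |Real.log s - Real.log r| = Real.log (s/r) := by
    rw [Real.log_div hs.ne' hr.ne']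
    exact abs_of_nonneg (by linarith [Real.log_nonneg ht, Real.log_div hs.ne' hr.ne'])
  have hpow : (1 + Real.log (s/r)) ^ σ ≤ C * (s/r) ^ (2⁻¹:ℝ) := hC _ ht
  have habs : ∀ x : ℝ, (0:ℝ) ≤ 1 + |Real.log x| := fun x => by positivity
  constructor
  · calc (1 + |Real.log r|) ^ σ
        ≤ ((1 + |Real.log s|) * (1 + |Real.log r - Real.log s|)) ^ σ :=
          Real.rpow_le_rpow (habs r) (one_add_abs_log_le r s) hσ.le
      _ = (1 + |Real.log s|) ^ σ * (1 + Real.log (s/r)) ^ σ := by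
          rw [abs_sub_comm, hlog, Real.mul_rpow (habs s) (by linarith [Real.log_nonneg ht])]
      _ ≤ (1 + |Real.log s|) ^ σ * (C * (s/r) ^ (2⁻¹:ℝ)) :=
          mul_le_mul_of_nonneg_left hpow (by positivity)
      _ = C * (s/r) ^ (2⁻¹:ℝ) * (1 + |Real.log s|) ^ σ := by ring
  · calc (1 + |Real.log s|) ^ σ
        ≤ ((1 + |Real.log r|) * (1 + |Real.log s - Real.log r|)) ^ σ :=
          Real.rpow_le_rpow (habs s) (one_add_abs_log_le s r) hσ.le
      _ = (1 + |Real.log r|) ^ σ * (1 + Real.log (s/r)) ^ σ := by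
          rw [hlog, Real.mul_rpow (habs r) (by linarith [Real.log_nonneg ht])]
      _ ≤ (1 + |Real.log r|) ^ σ * (C * (s/r) ^ (2⁻¹:ℝ)) :=
          mul_le_mul_of_nonneg_left hpow (by positivity)
      _ = C * (s/r) ^ (2⁻¹:ℝ) * (1 + |Real.log r|) ^ σ := by ring

lemma phi_meas {n : ℕ} :
    Measurable (fun x : EuclideanSpace ℝ (Fin n) => ‖x‖ ^ (-(3:ℝ)/2)) := by
  fun_prop

lemma integrableOn_norm_rpow_ball {n : ℕ} (hn : 2 ≤ n) (ρ : ℝ) :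
    IntegrableOn (fun x : EuclideanSpace ℝ (Fin n) => ‖x‖ ^ (-(3:ℝ)/2))
      (Metric.ball 0 ρ) volume := by
  set E := EuclideanSpace ℝ (Fin n)
  haveI : Nonempty (Fin n) := ⟨⟨0, by omega⟩⟩
  have h0 : ∀ x : E, 0 ≤ ‖x‖ ^ (-(3:ℝ)/2) := fun x => Real.rpow_nonneg (norm_nonneg x) _
  refine ⟨phi_meas.aestronglyMeasurable, ?_⟩
  have heq : (∫⁻ x, ‖(‖x‖ ^ (-(3:ℝ)/2) : ℝ)‖ₑ ∂(volume.restrict (Metric.ball (0:E) ρ)))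
      = ∫⁻ x, ENNReal.ofReal (‖x‖ ^ (-(3:ℝ)/2)) ∂(volume.restrict (Metric.ball (0:E) ρ)) :=
    lintegral_enorm_of_nonneg fun x => h0 x
  rw [HasFiniteIntegral, heq,
    lintegral_eq_lintegral_meas_le _ (Filter.Eventually.of_forall h0) phi_meas.aemeasurable]
  set ν := volume.restrict (Metric.ball (0:E) ρ)
  have hsplit : (∫⁻ t in Ioi (0:ℝ), ν {a | t ≤ ‖a‖ ^ (-(3:ℝ)/2)})
      ≤ (∫⁻ t in Ioc (0:ℝ) 1, ν {a | t ≤ ‖a‖ ^ (-(3:ℝ)/2)})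
        + ∫⁻ t in Ioi (1:ℝ), ν {a | t ≤ ‖a‖ ^ (-(3:ℝ)/2)} :=
    le_trans (lintegral_mono_set Ioi_subset_Ioc_union_Ioi) (lintegral_union_le _ _ _)
  refine lt_of_le_of_lt hsplit (ENNReal.add_lt_top.2 ⟨?_, ?_⟩)
  · have hb : ∀ t : ℝ, ν {a | t ≤ ‖a‖ ^ (-(3:ℝ)/2)} ≤ volume (Metric.ball (0:E) ρ) := by
      intro t
      calc ν {a | t ≤ ‖a‖ ^ (-(3:ℝ)/2)} ≤ ν univ := measure_mono (subset_univ _)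
        _ = volume (Metric.ball (0:E) ρ) := by
            simp [ν, Measure.restrict_apply_univ]
    calc (∫⁻ t in Ioc (0:ℝ) 1, ν {a | t ≤ ‖a‖ ^ (-(3:ℝ)/2)})
        ≤ ∫⁻ _ in Ioc (0:ℝ) 1, volume (Metric.ball (0:E) ρ) :=
          lintegral_mono fun t => hb t
      _ = volume (Metric.ball (0:E) ρ) * volume (Ioc (0:ℝ) 1) := setLIntegral_const _ _
      _ < ⊤ := ENNReal.mul_lt_top measure_ball_lt_top (by simp)
  · have hb : ∀ t ∈ Ioi (1:ℝ), ν {a | t ≤ ‖a‖ ^ (-(3:ℝ)/2)}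
        ≤ ENNReal.ofReal (t ^ ((-(2:ℝ)/3) * n)) * volume (Metric.ball (0:E) 1) := by
      intro t ht
      have ht0 : (0:ℝ) < t := lt_trans one_pos ht
      have hsub : {a : E | t ≤ ‖a‖ ^ (-(3:ℝ)/2)} ⊆ Metric.closedBall 0 (t ^ (-(2:ℝ)/3)) := by
        intro a ha
        simp only [mem_setOf_eq] at ha
        have hna : 0 < ‖a‖ := by
          rcases eq_or_lt_of_le (norm_nonneg a) with h | h
          · exfalso
            rw [← h, Real.zero_rpow (by norm_num)] at ha
            linarith
          · exact h
        have h1 : (‖a‖ ^ (-(3:ℝ)/2)) ^ (-(2:ℝ)/3) ≤ t ^ (-(2:ℝ)/3) :=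
          Real.rpow_le_rpow_of_nonpos ht0 ha (by norm_num)
        rw [← Real.rpow_mul (norm_nonneg a),
          show (-(3:ℝ)/2) * (-(2:ℝ)/3) = 1 by norm_num, Real.rpow_one] at h1
        rw [Metric.mem_closedBall, dist_zero_right]
        exact h1
      calc ν {a : E | t ≤ ‖a‖ ^ (-(3:ℝ)/2)}
          ≤ volume {a : E | t ≤ ‖a‖ ^ (-(3:ℝ)/2)} := Measure.restrict_le_self _
        _ ≤ volume (Metric.closedBall (0:E) (t ^ (-(2:ℝ)/3))) := measure_mono hsub
        _ = ENNReal.ofReal ((t ^ (-(2:ℝ)/3)) ^ (Module.finrank ℝ E)) *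
              volume (Metric.ball (0:E) 1) :=
            Measure.addHaar_closedBall _ _ (Real.rpow_nonneg ht0.le _)
        _ = ENNReal.ofReal (t ^ ((-(2:ℝ)/3) * n)) * volume (Metric.ball (0:E) 1) := by
            rw [← Real.rpow_natCast (t ^ (-(2:ℝ)/3)) _, ← Real.rpow_mul ht0.le]
            congr 2
            simp [E, finrank_euclideanSpace_fin]
    calc (∫⁻ t in Ioi (1:ℝ), ν {a | t ≤ ‖a‖ ^ (-(3:ℝ)/2)})
        ≤ ∫⁻ t in Ioi (1:ℝ), ENNReal.ofReal (t ^ ((-(2:ℝ)/3) * n)) *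
            volume (Metric.ball (0:E) 1) :=
          setLIntegral_mono' measurableSet_Ioi hb
      _ = (∫⁻ t in Ioi (1:ℝ), ENNReal.ofReal (t ^ ((-(2:ℝ)/3) * n))) *
            volume (Metric.ball (0:E) 1) :=
          lintegral_mul_const' _ _ measure_ball_lt_top.ne
      _ < ⊤ := by
          refine ENNReal.mul_lt_top ?_ measure_ball_lt_top
          refine IntegrableOn.setLIntegral_lt_top ?_
          refine integrableOn_Ioi_rpow_of_lt ?_ one_pos
          have h2 : (2:ℝ) ≤ (n:ℝ) := by exact_mod_cast hn
          nlinarith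

lemma scale_norm_rpow_ball (n : ℕ) (ρ : ℝ) (hρ : 0 < ρ) :
    (∫ x in Metric.ball (0:EuclideanSpace ℝ (Fin n)) ρ, ‖x‖ ^ (-(3:ℝ)/2)) =
      ρ ^ n * ρ ^ (-(3:ℝ)/2) *
        ∫ x in Metric.ball (0:EuclideanSpace ℝ (Fin n)) 1, ‖x‖ ^ (-(3:ℝ)/2) := by
  set E := EuclideanSpace ℝ (Fin n)
  have h := MeasureTheory.Measure.setIntegral_comp_smul_of_pos (volume)
    (fun x : E => ‖x‖ ^ (-(3:ℝ)/2)) (Metric.ball 0 1) hρ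
  rw [smul_unitBall_of_pos hρ] at h
  have hL : (∫ x in Metric.ball (0:E) 1, ‖ρ • x‖ ^ (-(3:ℝ)/2))
      = ρ ^ (-(3:ℝ)/2) * ∫ x in Metric.ball (0:E) 1, ‖x‖ ^ (-(3:ℝ)/2) := by
    rw [← MeasureTheory.integral_const_mul]
    refine setIntegral_congr_fun measurableSet_ball fun x _ => ?_
    rw [norm_smul, Real.norm_eq_abs, abs_of_pos hρ,
      Real.mul_rpow hρ.le (norm_nonneg x)]
  rw [hL] at h
  have hfr : Module.finrank ℝ E = n := finrank_euclideanSpace_fin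
  rw [hfr, smul_eq_mul] at h
  have hρn : (0:ℝ) < ρ ^ n := by positivity
  field_simp at h ⊢
  linarith [h]

end Aux

set_option maxHeartbeats 1000000 in
/-- The weight `w_σ(x) = |x|(1+|log|x||)^σ` is a Muckenhoupt A₂ weight on `ℝⁿ`. -/
theorem wsigma_is_A2 (n : ℕ) (hn : 2 ≤ n) (σ : ℝ) (hσ : 1 < σ) :
    ∃ A : ℝ, ∀ (x₀ : EuclideanSpace ℝ (Fin n)) (R : ℝ), 0 < R →
      A2quantity (fun x => ‖x‖ * (1 + |Real.log ‖x‖|) ^ σ) x₀ R ≤ A := by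
  classical
  have hσ0 : (0:ℝ) < σ := by linarith
  obtain ⟨C, hC1, hkey⟩ := key_ratio σ hσ0
  have hC0 : (0:ℝ) < C := lt_of_lt_of_le one_pos hC1
  set E := EuclideanSpace ℝ (Fin n) with hE
  haveI : Nonempty (Fin n) := ⟨⟨0, by omega⟩⟩
  set g : ℝ → ℝ := fun r => r * (1 + |Real.log r|) ^ σ with hgdef
  have hgpos : ∀ r : ℝ, 0 < r → 0 < g r := fun r hr =>
    mul_pos hr (Real.rpow_pos_of_pos (by positivity) σ)
  have hG1 : ∀ r s : ℝ, 0 < r → r ≤ s → g r ≤ C * g s := by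
    intro r s hr hrs
    have hs : 0 < s := lt_of_lt_of_le hr hrs
    have ht : 1 ≤ s / r := (one_le_div hr).mpr hrs
    have h1 := (hkey r s hr hrs).1
    have h3 : (s/r) ^ (2⁻¹:ℝ) ≤ s/r := by
      calc (s/r) ^ (2⁻¹:ℝ) ≤ (s/r) ^ (1:ℝ) :=
            Real.rpow_le_rpow_of_exponent_le ht (by norm_num)
        _ = s/r := Real.rpow_one _
    have h4 : r * (s/r) ^ (2⁻¹:ℝ) ≤ s := by
      calc r * (s/r) ^ (2⁻¹:ℝ) ≤ r * (s/r) := by nlinarith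
        _ = s := by field_simp
    have hp : (0:ℝ) ≤ (1 + |Real.log s|) ^ σ := Real.rpow_nonneg (by positivity) _
    calc g r = r * (1 + |Real.log r|) ^ σ := rfl
      _ ≤ r * (C * (s/r) ^ (2⁻¹:ℝ) * (1 + |Real.log s|) ^ σ) :=
          mul_le_mul_of_nonneg_left h1 hr.le
      _ = C * (r * (s/r) ^ (2⁻¹:ℝ)) * (1 + |Real.log s|) ^ σ := by ring
      _ ≤ C * s * (1 + |Real.log s|) ^ σ :=
          mul_le_mul_of_nonneg_right (mul_le_mul_of_nonneg_left h4 hC0.le) hp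
      _ = C * g s := by simp only [hgdef]; ring
  have hG2 : ∀ r s : ℝ, 0 < r → r ≤ s → g s ≤ C * (s/r) ^ ((3:ℝ)/2) * g r := by
    intro r s hr hrs
    have hs : 0 < s := lt_of_lt_of_le hr hrs
    have htpos : 0 < s / r := div_pos hs hr
    have h1 := (hkey r s hr hrs).2
    have hsplit : (s/r) ^ ((3:ℝ)/2) = (s/r) * (s/r) ^ (2⁻¹:ℝ) := by
      nth_rewrite 2 [← Real.rpow_one (s/r)]
      rw [← Real.rpow_add htpos]; norm_num
    calc g s = s * (1 + |Real.log s|) ^ σ := rfl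
      _ ≤ s * (C * (s/r) ^ (2⁻¹:ℝ) * (1 + |Real.log r|) ^ σ) :=
          mul_le_mul_of_nonneg_left h1 hs.le
      _ = C * (s/r) ^ ((3:ℝ)/2) * g r := by
          rw [hsplit]
          simp only [hgdef]
          field_simp
  have hinv : ∀ a c M : ℝ, 0 < a → 0 < M → a ≤ M * c → c⁻¹ ≤ M * a⁻¹ := by
    intro a c M ha hM h
    have hc : 0 < c := by nlinarith
    calc c⁻¹ = a * a⁻¹ * c⁻¹ := by rw [mul_inv_cancel₀ ha.ne', one_mul]
      _ ≤ M * c * (a⁻¹ * c⁻¹) := by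
          rw [mul_assoc]
          exact mul_le_mul_of_nonneg_right h (by positivity)
      _ = M * a⁻¹ * (c * c⁻¹) := by ring
      _ = M * a⁻¹ := by rw [mul_inv_cancel₀ hc.ne', mul_one]
  have hwmeas : Measurable (fun x : E => ‖x‖ * (1 + |Real.log ‖x‖|) ^ σ) := by measurability
  have hwnn : ∀ x : E, 0 ≤ ‖x‖ * (1 + |Real.log ‖x‖|) ^ σ := fun x => by positivity
  set J1 : ℝ := ∫ x in Metric.ball (0:E) 1, ‖x‖ ^ (-(3:ℝ)/2) with hJ1def
  have hJ1 : 0 ≤ J1 := setIntegral_nonneg measurableSet_ball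
    fun x _ => Real.rpow_nonneg (norm_nonneg x) _
  set b : ℝ := (volume (Metric.ball (0:E) 1)).toReal with hbdef
  have hb : 0 < b := ENNReal.toReal_pos (Metric.measure_ball_pos volume 0 one_pos).ne'
    measure_ball_lt_top.ne
  refine ⟨C^3 * 3 ^ ((3:ℝ)/2) + C^3 * 3^n * J1 / b, ?_⟩
  intro x₀ R hR
  set w : E → ℝ := fun x => ‖x‖ * (1 + |Real.log ‖x‖|) ^ σ with hwdef
  set B := Metric.ball x₀ R with hBdef
  have hgw : ∀ x : E, w x = g ‖x‖ := fun x => rfl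
  have hνfin : volume B < ⊤ := measure_ball_lt_top
  set ν : ℝ := (volume B).toReal with hνdef
  have hν : 0 < ν := ENNReal.toReal_pos (Metric.measure_ball_pos volume x₀ hR).ne' hνfin.ne
  have hνeq : ν = R^n * b := by
    rw [hνdef, hBdef, Measure.addHaar_ball_of_pos volume x₀ hR]
    rw [show Module.finrank ℝ E = n from finrank_euclideanSpace_fin]
    rw [ENNReal.toReal_mul, ENNReal.toReal_ofReal (by positivity), hbdef]
  have hnormle : ∀ x ∈ B, ‖x‖ ≤ ‖x₀‖ + R := by
    intro x hx
    have h2 : ‖x - x₀‖ < R := mem_ball_iff_norm.mp hx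
    have h1 : ‖x‖ - ‖x₀‖ ≤ ‖x - x₀‖ := norm_sub_norm_le x x₀
    linarith
  have haR : 0 < ‖x₀‖ + R := by positivity
  have hwub : ∀ x ∈ B, w x ≤ C * g (‖x₀‖ + R) := by
    intro x hx
    rcases eq_or_lt_of_le (norm_nonneg x) with h0 | h0
    · rw [hgw, ← h0]
      have hg0 : g 0 = 0 := by simp [hgdef]
      rw [hg0]
      have := hgpos _ haR
      positivity
    · rw [hgw]; exact hG1 _ _ h0 (hnormle x hx)
  have hwint : IntegrableOn w B volume := by
    refine Measure.integrableOn_of_bounded (M := C * g (‖x₀‖ + R)) hνfin.ne hwmeas.aestronglyMeasurable ?_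
    refine (ae_restrict_mem measurableSet_ball).mono fun x hx => ?_
    rw [Real.norm_eq_abs, abs_of_nonneg (hwnn x)]
    exact hwub x hx
  have hIw : (∫ x in B, w x) ≤ ν * (C * g (‖x₀‖ + R)) := by
    calc (∫ x in B, w x) ≤ ∫ _x in B, C * g (‖x₀‖ + R) :=
        setIntegral_mono_on hwint (integrableOn_const hνfin.ne)
          measurableSet_ball hwub
      _ = ν * (C * g (‖x₀‖ + R)) := by rw [setIntegral_const, smul_eq_mul, measureReal_def]
  have hI1nn : 0 ≤ ∫ x in B, w x :=
    setIntegral_nonneg measurableSet_ball fun x _ => hwnn x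
  have hI2nn : 0 ≤ ∫ x in B, (w x)⁻¹ :=
    setIntegral_nonneg measurableSet_ball fun x _ => inv_nonneg.mpr (hwnn x)
  have hmain : ∀ P Q : ℝ, 0 ≤ P → 0 ≤ Q → (∫ x in B, w x) ≤ ν * P →
      (∫ x in B, (w x)⁻¹) ≤ ν * Q → A2quantity w x₀ R ≤ P * Q := by
    intro P Q hP hQ h1 h2
    unfold A2quantity
    rw [← hBdef, ← hνdef]
    have e1 : ν⁻¹ * (∫ x in B, w x) ≤ P := by
      rw [inv_mul_le_iff₀ hν]; linarith [h1]
    have e2 : ν⁻¹ * (∫ x in B, (w x)⁻¹) ≤ Q := by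
      rw [inv_mul_le_iff₀ hν]; linarith [h2]
    have e2nn : 0 ≤ ν⁻¹ * (∫ x in B, (w x)⁻¹) := by positivity
    exact mul_le_mul e1 e2 e2nn hP
  by_cases hcase : 2 * R ≤ ‖x₀‖
  · -- ball far from origin
    set d : ℝ := ‖x₀‖ - R with hddef
    have hd : 0 < d := by rw [hddef]; linarith
    have hgd := hgpos d hd
    have hlow : ∀ x ∈ B, (w x)⁻¹ ≤ C * (g d)⁻¹ := by
      intro x hx
      have hdx : d ≤ ‖x‖ := by
        have h1 : ‖x₀‖ - ‖x‖ ≤ ‖x₀ - x‖ := norm_sub_norm_le x₀ x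
        have h2 : ‖x₀ - x‖ < R := by
          rw [← dist_eq_norm, dist_comm]
          exact Metric.mem_ball.mp hx
        rw [hddef]; linarith
      rw [hgw]
      exact hinv (g d) (g ‖x‖) C hgd hC0 (hG1 d ‖x‖ hd hdx)
    have hwinvint : IntegrableOn (fun x => (w x)⁻¹) B volume := by
      refine Measure.integrableOn_of_bounded (M := C * (g d)⁻¹) hνfin.ne hwmeas.inv.aestronglyMeasurable ?_
      refine (ae_restrict_mem measurableSet_ball).mono fun x hx => ?_
      rw [Real.norm_eq_abs, abs_of_nonneg (inv_nonneg.mpr (hwnn x))]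
      exact hlow x hx
    have hIw2 : (∫ x in B, (w x)⁻¹) ≤ ν * (C * (g d)⁻¹) := by
      calc (∫ x in B, (w x)⁻¹) ≤ ∫ _x in B, C * (g d)⁻¹ :=
          setIntegral_mono_on hwinvint (integrableOn_const hνfin.ne)
            measurableSet_ball hlow
        _ = ν * (C * (g d)⁻¹) := by rw [setIntegral_const, smul_eq_mul, measureReal_def]
    have hfinal := hmain (C * g (‖x₀‖+R)) (C * (g d)⁻¹)
      (by positivity) (by positivity) hIw hIw2
    refine le_trans hfinal ?_
    have hge : g (‖x₀‖+R) ≤ C * 3 ^ ((3:ℝ)/2) * g d := by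
      have h1 := hG2 d (‖x₀‖+R) hd (by rw [hddef]; linarith)
      have h2 : (‖x₀‖+R)/d ≤ 3 := by
        rw [div_le_iff₀ hd, hddef]; linarith
      have h3 : ((‖x₀‖+R)/d) ^ ((3:ℝ)/2) ≤ 3 ^ ((3:ℝ)/2) :=
        Real.rpow_le_rpow (by positivity) h2 (by norm_num)
      calc g (‖x₀‖+R) ≤ C * ((‖x₀‖+R)/d) ^ ((3:ℝ)/2) * g d := h1
        _ ≤ C * 3 ^ ((3:ℝ)/2) * g d :=
            mul_le_mul_of_nonneg_right (mul_le_mul_of_nonneg_left h3 hC0.le) hgd.le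
    have h31 : (0:ℝ) < 3 ^ ((3:ℝ)/2) := by positivity
    calc (C * g (‖x₀‖+R)) * (C * (g d)⁻¹)
        ≤ (C * (C * 3 ^ ((3:ℝ)/2) * g d)) * (C * (g d)⁻¹) := by
          apply mul_le_mul_of_nonneg_right
            (mul_le_mul_of_nonneg_left hge hC0.le) (by positivity)
      _ = C^3 * 3 ^ ((3:ℝ)/2) * (g d * (g d)⁻¹) := by ring
      _ = C^3 * 3 ^ ((3:ℝ)/2) := by rw [mul_inv_cancel₀ hgd.ne', mul_one]
      _ ≤ C^3 * 3 ^ ((3:ℝ)/2) + C^3 * 3^n * J1 / b :=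
          le_add_of_nonneg_right
            (div_nonneg (mul_nonneg (by positivity) hJ1) hb.le)
  · -- ball near origin
    push_neg at hcase
    set s₀ : ℝ := 3 * R with hs₀def
    have hs₀ : 0 < s₀ := by rw [hs₀def]; linarith
    have hgs₀ := hgpos s₀ hs₀
    have hsub : B ⊆ Metric.ball (0:E) s₀ := by
      intro x hx
      rw [mem_ball_zero_iff]
      have := hnormle x hx
      rw [hs₀def]; linarith
    set K : ℝ := C * s₀ ^ ((3:ℝ)/2) * (g s₀)⁻¹ with hKdef
    have hK : 0 < K := by positivity
    have hdom : ∀ x ∈ Metric.ball (0:E) s₀, (w x)⁻¹ ≤ K * ‖x‖ ^ (-(3:ℝ)/2) := by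
      intro x hx
      rcases eq_or_lt_of_le (norm_nonneg x) with h0 | h0
      · rw [hgw, ← h0]
        have hg0 : g 0 = 0 := by simp [hgdef]
        rw [hg0, Real.zero_rpow (by norm_num : (-(3:ℝ)/2) ≠ 0)]
        simp
      · have hxs : ‖x‖ ≤ s₀ := (mem_ball_zero_iff.mp hx).le
        have h1 := hG2 ‖x‖ s₀ h0 hxs
        have h2 : (s₀ / ‖x‖) ^ ((3:ℝ)/2) = s₀ ^ ((3:ℝ)/2) * ‖x‖ ^ (-(3:ℝ)/2) := by
          rw [Real.div_rpow hs₀.le (norm_nonneg x), show (-(3:ℝ)/2) = -((3:ℝ)/2) by norm_num,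
            Real.rpow_neg (norm_nonneg x), div_eq_mul_inv]
        have hM : 0 < C * (s₀/‖x‖) ^ ((3:ℝ)/2) := by positivity
        have h3 := hinv (g s₀) (g ‖x‖) (C * (s₀/‖x‖) ^ ((3:ℝ)/2)) hgs₀ hM h1
        rw [hgw]
        calc (g ‖x‖)⁻¹ ≤ C * (s₀/‖x‖) ^ ((3:ℝ)/2) * (g s₀)⁻¹ := h3
          _ = K * ‖x‖ ^ (-(3:ℝ)/2) := by rw [hKdef, h2]; ring
    have hφint : IntegrableOn (fun x : E => ‖x‖ ^ (-(3:ℝ)/2)) (Metric.ball 0 s₀) volume :=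
      integrableOn_norm_rpow_ball hn s₀
    have hKφint : IntegrableOn (fun x : E => K * ‖x‖ ^ (-(3:ℝ)/2))
        (Metric.ball 0 s₀) volume := hφint.const_mul K
    have hwinvint : IntegrableOn (fun x => (w x)⁻¹) B volume := by
      refine Integrable.mono' (hKφint.mono_set hsub) hwmeas.inv.aestronglyMeasurable ?_
      refine (ae_restrict_mem measurableSet_ball).mono fun x hx => ?_
      rw [Real.norm_eq_abs, abs_of_nonneg (inv_nonneg.mpr (hwnn x))]
      exact hdom x (hsub hx)
    have hIw2 : (∫ x in B, (w x)⁻¹) ≤ ν * (C * (g s₀)⁻¹ * 3^n * J1 / b) := by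
      have hcancel : s₀ ^ ((3:ℝ)/2) * s₀ ^ (-(3:ℝ)/2) = 1 := by
        rw [← Real.rpow_add hs₀]; norm_num
      have hs₀n : s₀ ^ n = 3^n * R^n := by rw [hs₀def, mul_pow]
      calc (∫ x in B, (w x)⁻¹)
          ≤ ∫ x in B, K * ‖x‖ ^ (-(3:ℝ)/2) :=
            setIntegral_mono_on hwinvint (hKφint.mono_set hsub) measurableSet_ball
              (fun x hx => hdom x (hsub hx))
        _ ≤ ∫ x in Metric.ball (0:E) s₀, K * ‖x‖ ^ (-(3:ℝ)/2) := by
            refine setIntegral_mono_set hKφint ?_ (HasSubset.Subset.eventuallyLE hsub)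
            exact Filter.Eventually.of_forall fun x => by positivity
        _ = K * (s₀ ^ n * s₀ ^ (-(3:ℝ)/2) * J1) := by
            rw [MeasureTheory.integral_const_mul, scale_norm_rpow_ball n s₀ hs₀, ← hJ1def]
        _ = ν * (C * (g s₀)⁻¹ * 3^n * J1 / b) := by
            have hrw : K * (s₀ ^ n * s₀ ^ (-(3:ℝ)/2) * J1)
                = C * (g s₀)⁻¹ * (s₀ ^ ((3:ℝ)/2) * s₀ ^ (-(3:ℝ)/2)) * (s₀^n * J1) := by
              rw [hKdef]; ring
            rw [hrw, hcancel, mul_one, hs₀n, hνeq]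
            field_simp
    have hg3 : g (‖x₀‖ + R) ≤ C * g s₀ :=
      hG1 _ _ haR (by rw [hs₀def]; linarith)
    have hIw' : (∫ x in B, w x) ≤ ν * (C * (C * g s₀)) := by
      refine le_trans hIw ?_
      apply mul_le_mul_of_nonneg_left _ hν.le
      exact mul_le_mul_of_nonneg_left hg3 hC0.le
    have hQnn : 0 ≤ C * (g s₀)⁻¹ * 3^n * J1 / b :=
      div_nonneg (mul_nonneg (by positivity) hJ1) hb.le
    have hfinal := hmain (C * (C * g s₀)) (C * (g s₀)⁻¹ * 3^n * J1 / b)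
      (by positivity) hQnn hIw' hIw2
    refine le_trans hfinal ?_
    have hrw : (C * (C * g s₀)) * (C * (g s₀)⁻¹ * 3^n * J1 / b)
        = C^3 * 3^n * J1 / b * (g s₀ * (g s₀)⁻¹) := by ring
    rw [hrw, mul_inv_cancel₀ hgs₀.ne', mul_one]
    exact le_add_of_nonneg_left (by positivity)
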